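/- Let X be a nonempty finite type and μ a probability distribution (PMF) on X, regarded as the single-shot output distribution of a physical system; the n-fold system outputs n i.i.d. samples, i.e. the product distribution μ^⊗n on Fin n → X. Suppose there are m : ℕ → ℕ and a family of functions A'_n : {0,1}^(m n) → X such that for every n the total variation distance between the pushforward of U^(m n) under A'_n and μ is at most 2^(−n) (an efficient classical simulation, with the efficiency requirement dropped). Let l : ℕ → ℕ be strictly increasing. Define Ā_n : {0,1}^(n · m n) → (Fin n → X) by splitting the input into n consecutive blocks of length m n and applying A'_n to each block. Let G_k : {0,1}^k → {0,1}^(l k · m (l k)) be a family of functions satisfying: for every family of tests D_k : {0,1}^(l k · m (l k)) → Bool, the function k ↦ |Pr_{s ← U^k}[D_k (G_k s) = true] − Pr_{u ← U^(l k · m (l k))}[D_k u = true]| is negligible. Define B_k := Ā_{l k} ∘ G_k : {0,1}^k → (Fin (l k) → X). Then for every family of tests T_k : (Fin (l k) → X) → Bool, the function k ↦ |Pr_{s ← U^k}[T_k (B_k s) = true] − Pr_{x ← μ^⊗(l k)}[T_k x = true]| is negligible. -/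

import Mathlib

/-- The uniform probability distribution on bit strings of length `n`. -/
noncomputable def unif (n : ℕ) : PMF (Fin n → Bool) :=
  PMF.uniformOfFintype (Fin n → Bool)

/-- The probability, under the distribution `μ`, that the test `D` outputs `true`. -/
noncomputable def prTrue {α : Type*} (μ : PMF α) (D : α → Bool) : ℝ :=
  (μ.toOuterMeasure {x | D x = true}).toReal

/-- A function `f : ℕ → ℝ` is negligible if for every polynomial `p` that is positive on `ℕ`
there exists `N` such that `|f k| < 1 / p k` for all `k ≥ N`. -/
def Negligible (f : ℕ → ℝ) : Prop :=
  ∀ p : Polynomial ℝ, (∀ k : ℕ, 0 < p.eval (k : ℝ)) →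
    ∃ N : ℕ, ∀ k ≥ N, |f k| < 1 / p.eval (k : ℝ)

/-- The `n`-fold product distribution `μ^⊗n` on `Fin n → X`: the joint distribution of `n`
independent samples from `μ`. -/
noncomputable def prodPMF {X : Type*} [Fintype X] (μ : PMF X) (n : ℕ) :
    PMF (Fin n → X) :=
  PMF.ofFintype (fun x => ∏ i, μ (x i)) (by
    rw [← Fintype.prod_sum]
    have h : ∑ a : X, μ a = 1 := by rw [← μ.tsum_coe, tsum_fintype]
    simp [h])

/-- Total variation distance between two PMFs on a finite type. -/
noncomputable def tvDist {α : Type*} [Fintype α] (μ ν : PMF α) : ℝ :=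
  (1 / 2) * ∑ x : α, |(μ x).toReal - (ν x).toReal|

/-- Repeat the single-shot simulator `A' n : {0,1}^(m n) → X` on `n` consecutive blocks of
length `m n` of the input. -/
def Abar {X : Type*} (m : ℕ → ℕ) (A' : ∀ n : ℕ, (Fin (m n) → Bool) → X) (n : ℕ)
    (u : Fin (n * m n) → Bool) : Fin n → X :=
  fun i => A' n (fun j => u ⟨i.val * m n + j.val, by
    have hi := i.isLt
    have hj := j.isLt
    nlinarith⟩)


section AuxLemmas

open Finset Filter

lemma prTrue_eq_sum {α : Type*} [Fintype α] (μ : PMF α) (D : α → Bool) :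
    prTrue μ D = ∑ x, if D x then (μ x).toReal else 0 := by
  classical
  rw [prTrue, PMF.toOuterMeasure_apply, tsum_fintype, ENNReal.toReal_sum]
  · refine Finset.sum_congr rfl fun x _ => ?_
    by_cases h : D x <;> simp [Set.indicator, h]
  · intro a _
    by_cases h : D a <;> simp [Set.indicator, h, PMF.apply_ne_top]

lemma sum_toReal_pmf {α : Type*} [Fintype α] (μ : PMF α) :
    ∑ x, (μ x).toReal = 1 := by
  have h : ∑ x, μ x = 1 := by rw [← μ.tsum_coe, tsum_fintype]
  rw [← ENNReal.toReal_sum (fun a _ => PMF.apply_ne_top μ a), h, ENNReal.toReal_one]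

lemma prTrue_sub_le {α : Type*} [Fintype α] (P Q : PMF α) (D : α → Bool) :
    |prTrue P D - prTrue Q D| ≤ ∑ x, |(P x).toReal - (Q x).toReal| := by
  rw [prTrue_eq_sum, prTrue_eq_sum, ← Finset.sum_sub_distrib]
  refine (Finset.abs_sum_le_sum_abs _ _).trans (Finset.sum_le_sum fun x _ => ?_)
  by_cases h : D x <;> simp [h, abs_nonneg]

lemma prod_abs_sub_le {X : Type*} [Fintype X] (f g : X → ℝ)
    (hf0 : ∀ a, 0 ≤ f a) (hg0 : ∀ a, 0 ≤ g a)
    (hf1 : ∑ a, f a = 1) (hg1 : ∑ a, g a = 1) :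
    ∀ n : ℕ, ∑ x : Fin n → X, |∏ i, f (x i) - ∏ i, g (x i)| ≤ n * ∑ a, |f a - g a| := by
  classical
  intro n
  induction n with
  | zero => simp
  | succ n ih =>
    rw [← Equiv.sum_comp (Fin.consEquiv fun _ : Fin (n+1) => X)
      (fun x : Fin (n+1) → X => |∏ i, f (x i) - ∏ i, g (x i)|)]
    simp only [Fin.consEquiv_apply]
    have key : ∀ p : X × (Fin n → X),
        |∏ i : Fin (n+1), f ((Fin.cons p.1 p.2 : ∀ _ : Fin (n+1), X) i) - ∏ i : Fin (n+1), g ((Fin.cons p.1 p.2 : ∀ _ : Fin (n+1), X) i)|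
        ≤ f p.1 * |∏ i, f (p.2 i) - ∏ i, g (p.2 i)| + |f p.1 - g p.1| * ∏ i, g (p.2 i) := by
      rintro ⟨a, y⟩
      have hf' : ∏ i : Fin (n+1), f ((Fin.cons a y : ∀ _ : Fin (n+1), X) i) = f a * ∏ i, f (y i) := by
        rw [show (fun i : Fin (n+1) => f ((Fin.cons a y : ∀ _ : Fin (n+1), X) i)) = Fin.cons (f a) (fun i => f (y i)) by
          funext i; exact i.cases rfl (fun j => rfl), Fin.prod_cons]
      have hg' : ∏ i : Fin (n+1), g ((Fin.cons a y : ∀ _ : Fin (n+1), X) i) = g a * ∏ i, g (y i) := by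
        rw [show (fun i : Fin (n+1) => g ((Fin.cons a y : ∀ _ : Fin (n+1), X) i)) = Fin.cons (g a) (fun i => g (y i)) by
          funext i; exact i.cases rfl (fun j => rfl), Fin.prod_cons]
      simp only [hf', hg']
      have : f a * ∏ i, f (y i) - g a * ∏ i, g (y i)
          = f a * (∏ i, f (y i) - ∏ i, g (y i)) + (f a - g a) * ∏ i, g (y i) := by ring
      rw [this]
      refine (abs_add_le _ _).trans ?_
      rw [abs_mul, abs_mul, abs_of_nonneg (hf0 a),
        abs_of_nonneg (Finset.prod_nonneg fun i _ => hg0 (y i))]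
    refine (Finset.sum_le_sum fun p _ => key p).trans ?_
    rw [Finset.sum_add_distrib]; simp only [Fintype.sum_prod_type]
    have e1 : ∑ a : X, ∑ y : Fin n → X, f a * |∏ i, f (y i) - ∏ i, g (y i)|
        = ∑ y : Fin n → X, |∏ i, f (y i) - ∏ i, g (y i)| := by
      rw [← Finset.sum_mul_sum, hf1, one_mul]
    have e2 : ∑ a : X, ∑ y : Fin n → X, |f a - g a| * ∏ i, g (y i)
        = ∑ a : X, |f a - g a| := by
      have hg : ∑ y : Fin n → X, ∏ i, g (y i) = 1 := by
        rw [← Fintype.prod_sum]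
        simp [hg1]
      refine Finset.sum_congr rfl fun a _ => ?_
      rw [← Finset.mul_sum, hg, mul_one]
    rw [e1, e2]
    push_cast
    nlinarith [Finset.sum_nonneg (fun a (_ : a ∈ univ) => abs_nonneg (f a - g a))]

lemma blk_div_lt {n M : ℕ} (t : Fin (n * M)) : t.val / M < n := by
  have hM : 0 < M := Nat.pos_of_ne_zero fun h => absurd t.2 (by simp [h])
  exact (Nat.div_lt_iff_lt_mul hM).2 t.2

lemma blk_mod_lt {n M : ℕ} (t : Fin (n * M)) : t.val % M < M := by
  have hM : 0 < M := Nat.pos_of_ne_zero fun h => absurd t.2 (by simp [h])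
  exact Nat.mod_lt _ hM

def blockEquiv (n M : ℕ) : (Fin n → Fin M → Bool) ≃ (Fin (n * M) → Bool) where
  toFun v t := v ⟨t.val / M, blk_div_lt t⟩ ⟨t.val % M, blk_mod_lt t⟩
  invFun u i j := u ⟨i.val * M + j.val, by
    have hi := i.isLt; have hj := j.isLt; nlinarith⟩
  left_inv v := by
    funext i j
    have hM : 0 < M := j.pos
    have h1 : (i.val * M + j.val) / M = i.val := by
      rw [add_comm, mul_comm, Nat.add_mul_div_left _ _ hM, Nat.div_eq_of_lt j.2, zero_add]
    have h2 : (i.val * M + j.val) % M = j.val := by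
      rw [add_comm, Nat.add_mul_mod_self_right, Nat.mod_eq_of_lt j.2]
    simp only [h1, h2, Fin.eta]
  right_inv u := by
    funext t
    have h : t.val / M * M + t.val % M = t.val := by
      rw [mul_comm]; exact Nat.div_add_mod t.val M
    simp only [h, Fin.eta]

lemma Abar_blockEquiv {X : Type*} (m : ℕ → ℕ) (A' : ∀ n : ℕ, (Fin (m n) → Bool) → X)
    (n : ℕ) (v : Fin n → Fin (m n) → Bool) :
    Abar m A' n (blockEquiv n (m n) v) = fun i => A' n (v i) := by
  funext i
  show A' n _ = A' n (v i)
  congr 1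
  funext j
  show v ⟨(i.val * m n + j.val) / m n, _⟩ ⟨(i.val * m n + j.val) % m n, _⟩ = v i j
  have hM : 0 < m n := j.pos
  have h1 : (i.val * m n + j.val) / m n = i.val := by
    rw [add_comm, mul_comm, Nat.add_mul_div_left _ _ hM, Nat.div_eq_of_lt j.2, zero_add]
  have h2 : (i.val * m n + j.val) % m n = j.val := by
    rw [add_comm, Nat.add_mul_mod_self_right, Nat.mod_eq_of_lt j.2]
  simp only [h1, h2, Fin.eta]

lemma unif_apply_toReal {N : ℕ} (u : Fin N → Bool) :
    ((unif N) u).toReal = ((2:ℝ)^N)⁻¹ := by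
  rw [unif, PMF.uniformOfFintype_apply, ENNReal.toReal_inv]
  norm_num [Fintype.card_fun]

lemma map_unif_apply_toReal {N : ℕ} {X : Type*} [Fintype X] [DecidableEq X]
    (f : (Fin N → Bool) → X) (b : X) :
    (((unif N).map f) b).toReal
      = (Finset.univ.filter fun s => f s = b).card * ((2:ℝ)^N)⁻¹ := by
  rw [PMF.map_apply, tsum_fintype, ENNReal.toReal_sum]
  · simp only [apply_ite ENNReal.toReal, ENNReal.toReal_zero, unif_apply_toReal]
    convert_to (∑ x ∈ Finset.univ.filter (fun s => b = f s), ((2:ℝ)^N)⁻¹) = _ using 1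
    · rw [Finset.sum_filter]; congr!
    rw [Finset.sum_const, nsmul_eq_mul]
    have hfe : (Finset.univ.filter fun s : Fin N → Bool => b = f s)
        = Finset.univ.filter fun s => f s = b := by
      ext s; simp [eq_comm]
    rw [hfe]
  · intro s _
    split <;> simp [PMF.apply_ne_top]

lemma fiber_sum {X S : Type*} [Fintype X] [DecidableEq X] [Fintype S] [DecidableEq S]
    (n : ℕ) (A : S → X) (h : (Fin n → X) → ℝ) :
    ∑ v : Fin n → S, h (fun i => A (v i))
      = ∑ x : Fin n → X,
          ((∏ i, ((Finset.univ.filter fun s => A s = x i).card : ℝ)) * h x) := by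
  rw [← Finset.sum_fiberwise (ι := Fin n → S) (κ := Fin n → X) Finset.univ
    (fun v => fun i => A (v i)) (fun v => h (fun i => A (v i)))]
  refine Finset.sum_congr rfl fun x _ => ?_
  have hcong : ∀ v ∈ Finset.univ.filter (fun v : Fin n → S => (fun i => A (v i)) = x),
      h (fun i => A (v i)) = h x := by
    intro v hv
    rw [Finset.mem_filter] at hv
    rw [hv.2]
  rw [Finset.sum_congr rfl hcong, Finset.sum_const, nsmul_eq_mul]
  congr 1
  have hfilter : Finset.univ.filter (fun v : Fin n → S => (fun i => A (v i)) = x)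
      = Fintype.piFinset (fun i => Finset.univ.filter fun s => A s = x i) := by
    ext v
    simp [Fintype.mem_piFinset, funext_iff]
  rw [hfilter, Fintype.card_piFinset]
  push_cast
  rfl

lemma step4 {X : Type*} [Fintype X] [DecidableEq X] (m : ℕ → ℕ)
    (A' : ∀ n : ℕ, (Fin (m n) → Bool) → X) (n : ℕ) (F : (Fin n → X) → Bool) :
    prTrue (unif (n * m n)) (fun u => F (Abar m A' n u))
      = prTrue (prodPMF ((unif (m n)).map (A' n)) n) F := by
  rw [prTrue_eq_sum, prTrue_eq_sum]
  have e1 : (∑ u : Fin (n * m n) → Bool,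
        if F (Abar m A' n u) then ((unif (n * m n)) u).toReal else 0)
      = ∑ v : Fin n → (Fin (m n) → Bool),
          (fun x => if F x then ((2:ℝ)^(n * m n))⁻¹ else 0) (fun i => A' n (v i)) := by
    rw [← Equiv.sum_comp (blockEquiv n (m n))
      (fun u => if F (Abar m A' n u) then ((unif (n * m n)) u).toReal else 0)]
    refine Finset.sum_congr rfl fun v _ => ?_
    rw [Abar_blockEquiv, unif_apply_toReal]
  rw [e1, fiber_sum n (A' n) (fun x => if F x then ((2:ℝ)^(n * m n))⁻¹ else 0)]
  refine Finset.sum_congr rfl fun x _ => ?_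
  rw [prodPMF, PMF.ofFintype_apply, ENNReal.toReal_prod]
  have hval : ∀ i : Fin n, (((unif (m n)).map (A' n)) (x i)).toReal
      = (Finset.univ.filter fun s => A' n s = x i).card * ((2:ℝ)^(m n))⁻¹ :=
    fun i => map_unif_apply_toReal (A' n) (x i)
  simp only [hval]
  rw [Finset.prod_mul_distrib, Finset.prod_const, Finset.card_univ, Fintype.card_fin]
  have hpow : (((2:ℝ)^(m n))⁻¹)^n = ((2:ℝ)^(n * m n))⁻¹ := by
    rw [inv_pow, ← pow_mul, mul_comm (m n) n]
  rw [hpow]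
  by_cases h : F x
  · simp only [h, if_true]
  · simp [h]

lemma tv_step {X : Type*} [Fintype X] (ν μ' : PMF X) (n : ℕ) (F : (Fin n → X) → Bool) :
    |prTrue (prodPMF ν n) F - prTrue (prodPMF μ' n) F| ≤ n * (2 * tvDist ν μ') := by
  refine (prTrue_sub_le _ _ F).trans ?_
  have hv : ∀ x : Fin n → X, ((prodPMF ν n) x).toReal = ∏ i, (ν (x i)).toReal := fun x => by
    rw [prodPMF, PMF.ofFintype_apply, ENNReal.toReal_prod]
  have hm : ∀ x : Fin n → X, ((prodPMF μ' n) x).toReal = ∏ i, (μ' (x i)).toReal := fun x => by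
    rw [prodPMF, PMF.ofFintype_apply, ENNReal.toReal_prod]
  simp only [hv, hm]
  refine (prod_abs_sub_le (fun a => (ν a).toReal) (fun a => (μ' a).toReal)
    (fun a => ENNReal.toReal_nonneg) (fun a => ENNReal.toReal_nonneg)
    (sum_toReal_pmf ν) (sum_toReal_pmf μ') n).trans (le_of_eq ?_)
  rw [tvDist]
  ring

lemma negligible_of_le {f g : ℕ → ℝ} (h : ∀ k, |f k| ≤ |g k|) (hg : Negligible g) :
    Negligible f := fun p hp =>
  (hg p hp).imp fun _N hN k hk => lt_of_le_of_lt (h k) (hN k hk)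

lemma negligible_add {f g : ℕ → ℝ} (hf : Negligible f) (hg : Negligible g) :
    Negligible (fun k => f k + g k) := by
  intro p hp
  have hp2 : ∀ k : ℕ, 0 < ((2 : Polynomial ℝ) * p).eval (k : ℝ) := by
    intro k
    rw [Polynomial.eval_mul]
    have := hp k
    norm_num
    positivity
  obtain ⟨N1, hN1⟩ := hf _ hp2
  obtain ⟨N2, hN2⟩ := hg _ hp2
  refine ⟨max N1 N2, fun k hk => ?_⟩
  have h1 := hN1 k (le_trans (le_max_left _ _) hk)
  have h2 := hN2 k (le_trans (le_max_right _ _) hk)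
  rw [Polynomial.eval_mul] at h1 h2
  have he : ((2 : Polynomial ℝ)).eval (k : ℝ) = 2 := by norm_num
  rw [he] at h1 h2
  have hpk := hp k
  calc |f k + g k| ≤ |f k| + |g k| := abs_add_le _ _
    _ < 1 / (2 * p.eval (k:ℝ)) + 1 / (2 * p.eval (k:ℝ)) := add_lt_add h1 h2
    _ = 1 / p.eval (k:ℝ) := by
        rw [← add_div]
        rw [div_eq_div_iff (by positivity) (ne_of_gt hpk)]
        ring

lemma tendsto_poly_halfpow (p : Polynomial ℝ) :
    Tendsto (fun k : ℕ => p.eval (k : ℝ) * ((2:ℝ)⁻¹)^k) atTop (nhds 0) := by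
  induction p using Polynomial.induction_on with
  | C a =>
      simpa using
        (tendsto_pow_atTop_nhds_zero_of_lt_one (by norm_num : (0:ℝ) ≤ 2⁻¹)
          (by norm_num)).const_mul a
  | add p q hp hq =>
      simpa [add_mul] using hp.add hq
  | monomial n a _ =>
      have h := (summable_pow_mul_geometric_of_norm_lt_one (R := ℝ) (n+1)
        (r := (2:ℝ)⁻¹) (by rw [Real.norm_eq_abs, abs_of_pos (by norm_num : (0:ℝ) < 2⁻¹)]; norm_num)).tendsto_atTop_zero
      have h2 : Tendsto (fun k : ℕ => a * ((k:ℝ)^(n+1) * ((2:ℝ)⁻¹)^k)) atTop (nhds 0) := by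
        simpa using h.const_mul a
      refine h2.congr fun k => ?_
      simp only [Polynomial.eval_mul, Polynomial.eval_C, Polynomial.eval_pow, Polynomial.eval_X]
      ring

lemma nat_two_pow_anti {a b : ℕ} (ha : 1 ≤ a) (hab : a ≤ b) :
    (b : ℝ) * (2:ℝ)^(-(b:ℤ)) ≤ (a : ℝ) * (2:ℝ)^(-(a:ℤ)) := by
  obtain ⟨d, rfl⟩ := Nat.exists_eq_add_of_le hab
  have h2 : d < 2^d := Nat.lt_two_pow_self
  have hnat : (a + d) * 2^a ≤ a * 2^(a+d) := by
    have h1 : a + d ≤ a * (d + 1) := by nlinarith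
    calc (a + d) * 2^a ≤ (a * (d+1)) * 2^a := Nat.mul_le_mul_right _ h1
      _ ≤ (a * 2^d) * 2^a := Nat.mul_le_mul_right _ (Nat.mul_le_mul_left _ h2)
      _ = a * 2^(a+d) := by rw [pow_add]; ring
  rw [zpow_neg, zpow_neg, zpow_natCast, zpow_natCast, mul_comm, mul_comm ((a:ℝ)) _,
    inv_mul_eq_div, inv_mul_eq_div, div_le_div_iff₀ (by positivity) (by positivity)]
  exact_mod_cast hnat

lemma negligible_geom_bound (l : ℕ → ℕ) (hl : ∀ k, k ≤ l k) :
    Negligible (fun k => (l k : ℝ) * 2 * (2:ℝ)^(-(l k : ℤ))) := by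
  intro p hp
  have htend := tendsto_poly_halfpow (p * (2 * Polynomial.X))
  have h1 : ∀ᶠ k : ℕ in atTop, (p * (2 * Polynomial.X)).eval (k:ℝ) * ((2:ℝ)⁻¹)^k < 1 :=
    htend.eventually (eventually_lt_nhds (by norm_num))
  obtain ⟨N, hN⟩ := h1.exists_forall_of_atTop
  refine ⟨max N 1, fun k hk => ?_⟩
  have hk1 : 1 ≤ k := le_trans (le_max_right _ _) hk
  have hkN : N ≤ k := le_trans (le_max_left _ _) hk
  have hbound : (l k : ℝ) * (2:ℝ)^(-(l k : ℤ)) ≤ (k : ℝ) * (2:ℝ)^(-(k : ℤ)) :=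
    nat_two_pow_anti hk1 (hl k)
  have hq := hN k hkN
  rw [Polynomial.eval_mul] at hq
  have he : ((2 : Polynomial ℝ) * Polynomial.X).eval (k:ℝ) = 2 * (k:ℝ) := by
    simp [Polynomial.eval_mul]
  rw [he] at hq
  have hfk : |(l k : ℝ) * 2 * (2:ℝ)^(-(l k : ℤ))| = (l k : ℝ) * 2 * (2:ℝ)^(-(l k : ℤ)) := by
    rw [abs_of_nonneg]; positivity
  rw [hfk]
  have hppos := hp k
  rw [lt_div_iff₀ hppos]
  have hpow : ((2:ℝ)⁻¹)^k = (2:ℝ)^(-(k:ℤ)) := by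
    rw [zpow_neg, zpow_natCast, inv_pow]
  rw [hpow] at hq
  calc (l k : ℝ) * 2 * (2:ℝ)^(-(l k : ℤ)) * p.eval (k:ℝ)
      = ((l k : ℝ) * (2:ℝ)^(-(l k : ℤ))) * (2 * p.eval (k:ℝ)) := by ring
    _ ≤ ((k : ℝ) * (2:ℝ)^(-(k : ℤ))) * (2 * p.eval (k:ℝ)) := by
        have : (0:ℝ) < 2 * p.eval (k:ℝ) := by have := hp k; positivity
        exact mul_le_mul_of_nonneg_right hbound (le_of_lt this)
    _ = p.eval (k:ℝ) * (2 * (k:ℝ)) * (2:ℝ)^(-(k:ℤ)) := by ring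
    _ < 1 := hq

end AuxLemmas

/-- **Theorem 2**: if the physical system `μ` admits a classical simulation `A'` accurate to
`2^(-n)` in total variation, and `G` is a cryptographic pseudorandom generator, then the
pseudorandom simulator `B_k = Ā_{l k} ∘ G_k` is indistinguishable from the real `l k`-fold
system `μ^⊗(l k)` by every family of tests. -/
theorem ecs_system_indistinguishable_from_prng
    {X : Type*} [Fintype X] [Nonempty X] (μ : PMF X)
    (m : ℕ → ℕ) (A' : ∀ n : ℕ, (Fin (m n) → Bool) → X)
    (hA' : ∀ n : ℕ, tvDist ((unif (m n)).map (A' n)) μ ≤ (2 : ℝ) ^ (-(n : ℤ)))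
    (l : ℕ → ℕ) (hl : StrictMono l)
    (G : ∀ k : ℕ, (Fin k → Bool) → (Fin (l k * m (l k)) → Bool))
    (hG : ∀ D : ∀ k : ℕ, (Fin (l k * m (l k)) → Bool) → Bool,
      Negligible (fun k =>
        |prTrue (unif k) (fun s => D k (G k s))
          - prTrue (unif (l k * m (l k))) (fun u => D k u)|))
    (B : ∀ k : ℕ, (Fin k → Bool) → (Fin (l k) → X))
    (hB : ∀ k : ℕ, B k = fun s => Abar m A' (l k) (G k s))
    (T : ∀ k : ℕ, (Fin (l k) → X) → Bool) :
    Negligible (fun k =>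
      |prTrue (unif k) (fun s => T k (B k s))
        - prTrue (prodPMF μ (l k)) (T k)|) := by
  classical
  have hD := hG (fun k u => T k (Abar m A' (l k) u))
  have hbnd := negligible_geom_bound l (fun k => hl.le_apply)
  refine negligible_of_le (g := fun k =>
    |prTrue (unif k) (fun s => T k (Abar m A' (l k) (G k s)))
      - prTrue (unif (l k * m (l k))) (fun u => T k (Abar m A' (l k) u))|
    + (l k : ℝ) * 2 * (2:ℝ)^(-(l k : ℤ))) ?_ (negligible_add hD hbnd)
  intro k
  rw [abs_abs]
  have hnn : (0:ℝ) ≤ |prTrue (unif k) (fun s => T k (Abar m A' (l k) (G k s)))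
      - prTrue (unif (l k * m (l k))) (fun u => T k (Abar m A' (l k) u))|
    + (l k : ℝ) * 2 * (2:ℝ)^(-(l k : ℤ)) := by positivity
  rw [abs_of_nonneg hnn]
  have h1 : prTrue (unif k) (fun s => T k (B k s))
      = prTrue (unif k) (fun s => T k (Abar m A' (l k) (G k s))) := by
    rw [hB k]
  have h2 : prTrue (unif (l k * m (l k))) (fun u => T k (Abar m A' (l k) u))
      = prTrue (prodPMF ((unif (m (l k))).map (A' (l k))) (l k)) (T k) :=
    step4 m A' (l k) (T k)
  have h3 : |prTrue (prodPMF ((unif (m (l k))).map (A' (l k))) (l k)) (T k)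
      - prTrue (prodPMF μ (l k)) (T k)|
      ≤ (l k : ℝ) * 2 * (2:ℝ)^(-(l k : ℤ)) := by
    refine (tv_step _ _ _ _).trans ?_
    have := hA' (l k)
    have hlk : (0:ℝ) ≤ (l k : ℝ) := Nat.cast_nonneg _
    nlinarith
  calc |prTrue (unif k) (fun s => T k (B k s)) - prTrue (prodPMF μ (l k)) (T k)|
      ≤ |prTrue (unif k) (fun s => T k (B k s))
          - prTrue (unif (l k * m (l k))) (fun u => T k (Abar m A' (l k) u))|
        + |prTrue (unif (l k * m (l k))) (fun u => T k (Abar m A' (l k) u))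
          - prTrue (prodPMF μ (l k)) (T k)| := abs_sub_le _ _ _
    _ ≤ |prTrue (unif k) (fun s => T k (Abar m A' (l k) (G k s)))
          - prTrue (unif (l k * m (l k))) (fun u => T k (Abar m A' (l k) u))|
        + (l k : ℝ) * 2 * (2:ℝ)^(-(l k : ℤ)) := by
        rw [← h1]
        refine add_le_add le_rfl ?_
        rw [h2]
        exact h3
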